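/- Let O be a discrete valuation ring with maximal ideal 𝔪 and finite residue field. Let sp_{2d}(O) ⊆ Mat_{2d}(O) be the symplectic Lie algebra, consisting of all block matrices [[a, b],[c, -a^⊤]] with a, b, c ∈ Mat_d(O), b = b^⊤ and c = c^⊤. For n ≥ 0, let sp_{2d}(O)_n denote the image of sp_{2d}(O) under entrywise reduction Mat_{2d}(O) → Mat_{2d}(O/𝔪^n). Then for every n ≥ 0, ask(sp_{2d}(O)_n) = ask(Mat_{2d}(O/𝔪^n)). -/

import Mathlib

/-- The average size of the kernel of the elements of a set `N` of `m × n` matrices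
over a commutative ring `S`, where matrices act on row vectors by right multiplication. -/
noncomputable def ask {S : Type*} [CommRing S] {m n : Type*} [Fintype m]
    (N : Set (Matrix m n S)) : ℚ :=
  (Nat.card N : ℚ)⁻¹ *
    ∑ᶠ a : N, (Nat.card {x : m → S | Matrix.vecMul x (a : Matrix m n S) = 0} : ℚ)

/-- The image of a set of matrices over `R` under entrywise reduction modulo an ideal `c`. -/
def reduceMod {R : Type*} [CommRing R] {m n : Type*}
    (N : Set (Matrix m n R)) (c : Ideal R) :
    Set (Matrix m n (R ⧸ c)) :=
  (fun A : Matrix m n R => A.map (Ideal.Quotient.mk c)) '' N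

open Matrix

section Aux

/-- `A ↦ x ᵥ* A` as a linear map. -/
def vecMulLin {S : Type*} [CommRing S] {m n : Type*} [Fintype m] (x : m → S) :
    Matrix m n S →ₗ[S] (n → S) where
  toFun A := x ᵥ* A
  map_add' A B := by
    funext j; simp [Matrix.vecMul, dotProduct, mul_add, Finset.sum_add_distrib]
  map_smul' c A := by
    funext j; simp [Matrix.vecMul, dotProduct, Finset.mul_sum]
    exact Finset.sum_congr rfl fun k _ => by ring

lemma card_ker_mul_card_range {S M P : Type*} [CommRing S] [AddCommGroup M] [Module S M]
    [AddCommGroup P] [Module S P] (f : M →ₗ[S] P) :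
    Nat.card M = Nat.card (LinearMap.ker f) * Nat.card (LinearMap.range f) := by
  rw [Submodule.card_eq_card_quotient_mul_card (LinearMap.ker f)]
  congr 1
  exact Nat.card_congr f.quotKerEquivRange.toEquiv

lemma ask_submodule_eq {S : Type*} [CommRing S] [Fintype S] [DecidableEq S] {m n : Type*}
    [Fintype m] [Fintype n] [DecidableEq m] [DecidableEq n]
    (N : Submodule S (Matrix m n S)) :
    ask (N : Set (Matrix m n S)) =
      ∑ x : m → S, ((Nat.card (N.map (vecMulLin (n := n) x)) : ℚ))⁻¹ := by
  classical
  unfold ask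
  rw [finsum_eq_sum_of_fintype]
  have h1 : ∀ a : (N : Set (Matrix m n S)),
      (Nat.card {x : m → S | Matrix.vecMul x (a : Matrix m n S) = 0} : ℚ)
        = ∑ x : m → S, if Matrix.vecMul x (a : Matrix m n S) = 0 then 1 else 0 := by
    intro a
    rw [Nat.card_eq_fintype_card, Fintype.card_subtype, Finset.card_filter]
    push_cast
    simp
  rw [Finset.sum_congr rfl fun a _ => h1 a, Finset.sum_comm, Finset.mul_sum]
  refine Finset.sum_congr rfl fun x _ => ?_
  set ψ : N →ₗ[S] (n → S) := (vecMulLin x).comp N.subtype with hψ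
  have hker : (∑ a : (N : Set (Matrix m n S)),
      (if Matrix.vecMul x (a : Matrix m n S) = 0 then (1:ℚ) else 0))
      = (Nat.card (LinearMap.ker ψ) : ℚ) := by
    rw [Nat.card_eq_fintype_card, Fintype.card_subtype, Finset.card_filter]
    push_cast
    refine Finset.sum_congr rfl fun a _ => ?_
    simp [hψ, vecMulLin, LinearMap.mem_ker]
  rw [hker]
  have hrange : LinearMap.range ψ = N.map (vecMulLin (n := n) x) := by
    rw [hψ, LinearMap.range_comp, Submodule.range_subtype]
  have hcard : Nat.card (N : Set (Matrix m n S)) =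
      Nat.card (LinearMap.ker ψ) * Nat.card (LinearMap.range ψ) :=
    card_ker_mul_card_range ψ
  haveI h1' : Nonempty (LinearMap.ker ψ) := ⟨0⟩
  haveI h2' : Nonempty (LinearMap.range ψ) := ⟨0⟩
  have hk : (0:ℚ) < (Nat.card (LinearMap.ker ψ) : ℚ) := by
    exact_mod_cast Nat.card_pos
  rw [hcard, ← hrange, Nat.cast_mul, mul_inv,
    mul_comm ((Nat.card (LinearMap.ker ψ) : ℚ))⁻¹ ((Nat.card (LinearMap.range ψ) : ℚ))⁻¹,
    mul_assoc, inv_mul_cancel₀ hk.ne', mul_one]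

lemma exists_min_dvd {S : Type*} [CommRing S] (htot : ∀ a b : S, a ∣ b ∨ b ∣ a)
    {ι : Type*} [Fintype ι] [Nonempty ι] (y : ι → S) : ∃ i₀, ∀ j, y i₀ ∣ y j := by
  classical
  have key : ∀ t : Finset ι, t.Nonempty → ∃ i ∈ t, ∀ j ∈ t, y i ∣ y j := by
    intro t
    induction t using Finset.induction_on with
    | empty => intro h; exact absurd h (by simp)
    | insert a t' hnot ih =>
      intro _
      rcases t'.eq_empty_or_nonempty with rfl | hne
      · exact ⟨a, by simp⟩
      · obtain ⟨i, hi, hdvd⟩ := ih hne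
        rcases htot (y a) (y i) with h | h
        · exact ⟨a, Finset.mem_insert_self _ _, fun j hj => by
            rcases Finset.mem_insert.mp hj with rfl | hj
            · exact dvd_rfl
            · exact h.trans (hdvd j hj)⟩
        · exact ⟨i, Finset.mem_insert_of_mem hi, fun j hj => by
            rcases Finset.mem_insert.mp hj with rfl | hj
            · exact h
            · exact hdvd j hj⟩
  obtain ⟨i, _, h⟩ := key Finset.univ ⟨Classical.arbitrary ι, Finset.mem_univ _⟩
  exact ⟨i, fun j => h j (Finset.mem_univ j)⟩

lemma exists_symm_vecMul {S : Type*} [CommRing S] (htot : ∀ a b : S, a ∣ b ∨ b ∣ a)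
    {ι : Type*} [Fintype ι] [DecidableEq ι] (y : ι → S) (A : Matrix ι ι S) :
    ∃ M : Matrix ι ι S, M.transpose = M ∧ y ᵥ* M = y ᵥ* A := by
  rcases isEmpty_or_nonempty ι with h | h
  · exact ⟨0, by simp, funext fun j => h.elim j⟩
  obtain ⟨i₀, hi₀⟩ := exists_min_dvd htot y
  choose t ht using hi₀
  set s : ι → S := fun j => ∑ k, t k * A k j with hs
  set r : S := ∑ k, t k * s k with hr
  refine ⟨Matrix.of fun k j => (if k = i₀ then s j else 0) + (if j = i₀ then s k else 0)
      - (if k = i₀ then (if j = i₀ then r else 0) else 0), ?_, ?_⟩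
  · ext j k
    simp only [Matrix.transpose_apply]
    by_cases h1 : k = i₀ <;> by_cases h2 : j = i₀ <;> simp [h1, h2]
  · funext j
    have hyk : ∀ k, y k = y i₀ * t k := ht
    have hsum : ∑ k, y k * s k = y i₀ * r := by
      rw [hr, Finset.mul_sum]
      exact Finset.sum_congr rfl fun k _ => by rw [hyk k]; ring
    simp only [Matrix.vecMul, dotProduct, Matrix.of_apply]
    simp only [mul_add, mul_sub, Finset.sum_add_distrib, Finset.sum_sub_distrib,
      mul_ite, mul_zero]
    rw [Finset.sum_ite_eq' Finset.univ i₀ (fun k => y k * s j)]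
    by_cases h2 : j = i₀
    · subst h2
      simp only [if_pos rfl, Finset.mem_univ, if_true]
      rw [hsum, Finset.sum_ite_eq' Finset.univ j (fun k => y k * r)]
      simp only [Finset.mem_univ, if_true]
      have : ∀ k, y k * A k j = y j * (t k * A k j) := fun k => by rw [hyk k, hyk j]; ring
      calc y j * s j + y j * r - y j * r = y j * s j := by ring
        _ = ∑ k, y k * A k j := by
          rw [hs, Finset.mul_sum]
          exact (Finset.sum_congr rfl fun k _ => by rw [hyk k]; ring).symm
    · simp only [if_neg h2, Finset.sum_const_zero, Finset.mem_univ, if_true]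
      calc y i₀ * s j + 0 - ∑ x : ι, (if x = i₀ then (0:S) else 0) = y i₀ * s j := by simp
        _ = ∑ k, y k * A k j := by
          rw [hs, Finset.mul_sum]
          exact (Finset.sum_congr rfl fun k _ => by rw [hyk k]; ring).symm

variable (S : Type*) [CommRing S] (d : ℕ)

/-- The symplectic Lie algebra as a submodule of the matrix algebra. -/
def spSub : Submodule S (Matrix (Fin d ⊕ Fin d) (Fin d ⊕ Fin d) S) where
  carrier := {A | ∃ a b c : Matrix (Fin d) (Fin d) S,
      b.transpose = b ∧ c.transpose = c ∧ A = Matrix.fromBlocks a b c (-a.transpose)}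
  add_mem' := by
    rintro A A' ⟨a, b, c, hb, hc, rfl⟩ ⟨a', b', c', hb', hc', rfl⟩
    exact ⟨a + a', b + b', c + c', by rw [transpose_add, hb, hb'],
      by rw [transpose_add, hc, hc'],
      by rw [Matrix.fromBlocks_add]; congr 1; rw [transpose_add, neg_add]⟩
  zero_mem' := ⟨0, 0, 0, by simp, by simp, by simp [Matrix.fromBlocks_zero]⟩
  smul_mem' := by
    rintro r A ⟨a, b, c, hb, hc, rfl⟩
    exact ⟨r • a, r • b, r • c, by rw [transpose_smul, hb], by rw [transpose_smul, hc],
      by rw [Matrix.fromBlocks_smul]; congr 1; rw [transpose_smul, smul_neg]⟩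

/-- The standard symplectic structure matrix. -/
def Jmat : Matrix (Fin d ⊕ Fin d) (Fin d ⊕ Fin d) S := Matrix.fromBlocks 0 1 (-1) 0

lemma negJ_mul_J : (-Jmat S d) * Jmat S d = 1 := by
  have : (-Jmat S d) = Matrix.fromBlocks 0 (-1) 1 0 := by
    rw [Jmat, Matrix.fromBlocks_neg]; norm_num
  rw [this, Jmat, Matrix.fromBlocks_multiply, ← Matrix.fromBlocks_one]
  congr 1 <;> simp

lemma negJ_mul_symm_mem (M : Matrix (Fin d ⊕ Fin d) (Fin d ⊕ Fin d) S)
    (hM : M.transpose = M) : (-Jmat S d) * M ∈ spSub S d := by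
  set A := M.toBlocks₁₁ with hA
  set B := M.toBlocks₁₂ with hB
  set C := M.toBlocks₂₁ with hC
  set D := M.toBlocks₂₂ with hD
  have hM' : M = fromBlocks A B C D := (Matrix.fromBlocks_toBlocks M).symm
  rw [hM', Matrix.fromBlocks_transpose] at hM
  have h11 : A.transpose = A := congrArg Matrix.toBlocks₁₁ hM
  have h12 : C.transpose = B := congrArg Matrix.toBlocks₁₂ hM
  have h22 : D.transpose = D := congrArg Matrix.toBlocks₂₂ hM
  refine ⟨-C, -D, A, by rw [transpose_neg, h22], h11, ?_⟩
  rw [hM']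
  simp only [Jmat, Matrix.fromBlocks_neg, Matrix.fromBlocks_multiply]
  congr 1 <;> simp [h12.symm]

end Aux

section Quot

variable {O : Type*} [CommRing O] [IsDomain O] [IsDiscreteValuationRing O]

lemma dvd_total_quot (c : Ideal O) (a b : O ⧸ c) : a ∣ b ∨ b ∣ a := by
  obtain ⟨a', rfl⟩ := Ideal.Quotient.mk_surjective a
  obtain ⟨b', rfl⟩ := Ideal.Quotient.mk_surjective b
  rcases ValuationRing.dvd_total a' b' with h | h
  · exact Or.inl (map_dvd _ h)
  · exact Or.inr (map_dvd _ h)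

lemma finite_quotient_pow [Finite (IsLocalRing.ResidueField O)] (n : ℕ) :
    Finite (O ⧸ IsLocalRing.maximalIdeal O ^ n) := by
  induction n with
  | zero =>
    rw [pow_zero, Ideal.one_eq_top]
    haveI : Subsingleton (O ⧸ (⊤ : Ideal O)) := Ideal.Quotient.subsingleton_iff.mpr rfl
    exact Finite.of_subsingleton
  | succ n ih =>
    haveI := ih
    haveI hres : Finite (O ⧸ IsLocalRing.maximalIdeal O) :=
      ‹Finite (IsLocalRing.ResidueField O)›
    set I := (IsLocalRing.maximalIdeal O ^ n).map
      (Ideal.Quotient.mk (IsLocalRing.maximalIdeal O ^ (n + 1))) with hI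
    haveI : Finite I := Finite.of_equiv _
      ((Ideal.quotEquivPowQuotPowSuccEquiv
          (IsPrincipalIdealRing.principal (IsLocalRing.maximalIdeal O))
          (IsDiscreteValuationRing.not_a_field O) n).trans
        (Ideal.powQuotPowSuccEquivMapMkPowSuccPow (IsLocalRing.maximalIdeal O) n))
    haveI : Finite ((O ⧸ IsLocalRing.maximalIdeal O ^ (n + 1)) ⧸ I) :=
      Finite.of_equiv _
        ((DoubleQuot.quotQuotEquivQuotSup (IsLocalRing.maximalIdeal O ^ (n + 1))
            (IsLocalRing.maximalIdeal O ^ n)).trans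
          (Ideal.quotEquivOfEq (sup_eq_right.mpr
            (Ideal.pow_le_pow_right (Nat.le_succ n))))).symm.toEquiv
    exact Finite.of_ideal_quotient I

end Quot

/-- The ask zeta function of the symplectic Lie algebra `sp_{2d}(O)` coincides with that
of `gl_{2d}(O)`: at every level `n`, `ask(sp_{2d}(O)_n) = ask(Mat_{2d}(O/𝔪^n))`. -/
theorem ask_sp_eq_ask_gl {O : Type*} [CommRing O] [IsDomain O] [IsDiscreteValuationRing O]
    [Finite (IsLocalRing.ResidueField O)]
    (d : ℕ) (n : ℕ) :
    ask (reduceMod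
        {A : Matrix (Fin d ⊕ Fin d) (Fin d ⊕ Fin d) O |
          ∃ a b c : Matrix (Fin d) (Fin d) O,
            b.transpose = b ∧ c.transpose = c ∧
              A = Matrix.fromBlocks a b c (-a.transpose)}
        (IsLocalRing.maximalIdeal O ^ n)) =
      ask (Set.univ :
        Set (Matrix (Fin d ⊕ Fin d) (Fin d ⊕ Fin d)
          (O ⧸ IsLocalRing.maximalIdeal O ^ n))) := by
  classical
  set c : Ideal O := IsLocalRing.maximalIdeal O ^ n with hc
  haveI : Finite (O ⧸ c) := finite_quotient_pow n
  cases nonempty_fintype (O ⧸ c)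
  -- identify the reduced symplectic set with the symplectic submodule over the quotient
  have hred : reduceMod
      {A : Matrix (Fin d ⊕ Fin d) (Fin d ⊕ Fin d) O |
        ∃ a b c : Matrix (Fin d) (Fin d) O,
          b.transpose = b ∧ c.transpose = c ∧
            A = Matrix.fromBlocks a b c (-a.transpose)} c
      = (spSub (O ⧸ c) d : Set _) := by
    ext A
    constructor
    · rintro ⟨A', ⟨a, b, c', hb, hc', rfl⟩, rfl⟩
      refine ⟨a.map (Ideal.Quotient.mk c), b.map (Ideal.Quotient.mk c),
        c'.map (Ideal.Quotient.mk c), ?_, ?_, ?_⟩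
      pick_goal 3
      · show (Matrix.fromBlocks a b c' (-a.transpose)).map (Ideal.Quotient.mk c) = _
        rw [Matrix.fromBlocks_map]
        have h4 : (-a.transpose).map (Ideal.Quotient.mk c)
            = -(a.map (Ideal.Quotient.mk c)).transpose := by
          ext i j; simp [Matrix.map_apply]
        rw [h4]
      · rw [← Matrix.transpose_map, hb]
      · rw [← Matrix.transpose_map, hc']
    · rintro ⟨a, b, c', hb, hc', rfl⟩
      -- lift the blocks
      have hsurj := Ideal.Quotient.mk_surjective (I := c)
      set σ : (O ⧸ c) → O := Function.surjInv hsurj with hσ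
      have hσ' : ∀ z, Ideal.Quotient.mk c (σ z) = z := Function.surjInv_eq hsurj
      set a' : Matrix (Fin d) (Fin d) O := Matrix.of fun i j => σ (a i j) with ha'
      set b' : Matrix (Fin d) (Fin d) O :=
        Matrix.of fun i j => if i ≤ j then σ (b i j) else σ (b j i) with hb'
      set c'' : Matrix (Fin d) (Fin d) O :=
        Matrix.of fun i j => if i ≤ j then σ (c' i j) else σ (c' j i) with hc''
      have hbsymm : ∀ i j, b j i = b i j := fun i j => congrFun (congrFun hb i) j
      have hcsymm : ∀ i j, c' j i = c' i j := fun i j => congrFun (congrFun hc' i) j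
      refine ⟨Matrix.fromBlocks a' b' c'' (-a'.transpose), ⟨a', b', c'', ?_, ?_, rfl⟩, ?_⟩
      pick_goal 3
      · show (Matrix.fromBlocks a' b' c'' (-a'.transpose)).map (Ideal.Quotient.mk c)
            = Matrix.fromBlocks a b c' (-a.transpose)
        have h1 : a'.map (Ideal.Quotient.mk c) = a := by
          ext i j; simp [ha', Matrix.map_apply, hσ']
        have h2 : b'.map (Ideal.Quotient.mk c) = b := by
          ext i j
          simp only [Matrix.map_apply, hb', Matrix.of_apply]
          by_cases hij : i ≤ j
          · simp [hij, hσ']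
          · simp [hij, hσ', hbsymm i j]
        have h3 : c''.map (Ideal.Quotient.mk c) = c' := by
          ext i j
          simp only [Matrix.map_apply, hc'', Matrix.of_apply]
          by_cases hij : i ≤ j
          · simp [hij, hσ']
          · simp [hij, hσ', hcsymm i j]
        have h4 : (-a'.transpose).map (Ideal.Quotient.mk c) = -a.transpose := by
          ext i j
          simp [ha', Matrix.map_apply, hσ']
        rw [Matrix.fromBlocks_map, h1, h2, h3, h4]
      · ext i j
        simp only [Matrix.transpose_apply, hb', Matrix.of_apply]
        rcases le_total i j with h | h
        · rcases eq_or_ne i j with rfl | hne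
          · simp
          · rw [if_neg (fun h' => hne (le_antisymm h h')), if_pos h]
        · rcases eq_or_ne j i with rfl | hne
          · simp
          · rw [if_pos h, if_neg (fun h' => hne (le_antisymm h h'))]
      · ext i j
        simp only [Matrix.transpose_apply, hc'', Matrix.of_apply]
        rcases le_total i j with h | h
        · rcases eq_or_ne i j with rfl | hne
          · simp
          · rw [if_neg (fun h' => hne (le_antisymm h h')), if_pos h]
        · rcases eq_or_ne j i with rfl | hne
          · simp
          · rw [if_pos h, if_neg (fun h' => hne (le_antisymm h h'))]
  rw [hred]
  have htop : (Set.univ :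
      Set (Matrix (Fin d ⊕ Fin d) (Fin d ⊕ Fin d) (O ⧸ c)))
      = ((⊤ : Submodule (O ⧸ c) (Matrix (Fin d ⊕ Fin d) (Fin d ⊕ Fin d) (O ⧸ c))) : Set _) := by
    simp
  rw [htop, ask_submodule_eq, ask_submodule_eq]
  refine Finset.sum_congr rfl fun x _ => ?_
  have hmap : (spSub (O ⧸ c) d).map (vecMulLin x) =
      (⊤ : Submodule (O ⧸ c) (Matrix (Fin d ⊕ Fin d) (Fin d ⊕ Fin d) (O ⧸ c))).map
        (vecMulLin x) := by
    apply le_antisymm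
    · exact Submodule.map_mono le_top
    · rintro z ⟨A, -, rfl⟩
      -- z = x ᵥ* A; find a symplectic preimage
      obtain ⟨M, hMsymm, hMeq⟩ := exists_symm_vecMul (dvd_total_quot c)
        (x ᵥ* (-Jmat (O ⧸ c) d)) (Jmat (O ⧸ c) d * A)
      refine ⟨(-Jmat (O ⧸ c) d) * M, negJ_mul_symm_mem _ _ M hMsymm, ?_⟩
      show x ᵥ* ((-Jmat (O ⧸ c) d) * M) = x ᵥ* A
      rw [← Matrix.vecMul_vecMul, hMeq, Matrix.vecMul_vecMul, ← Matrix.mul_assoc,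
        negJ_mul_J, Matrix.one_mul]
  rw [hmap]
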